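/- Let g : ℝ → ℝ be positive, eventually monotone, and regularly varying at +∞ with index ν, and let f'' be positive with x·f''(x) → +∞. Then for any constant C > 0, g(x+h)/g(x) → 1 as x → +∞, uniformly over all h with |h| ≤ C/f''(x). -/

import Mathlib

open Filter

/-- If `g` is positive, eventually monotone and regularly varying at `+∞` with index `ν`,
and `f''` is eventually positive with `x * f''(x) → +∞`, then for any `C > 0`,
`g(x+h)/g(x) → 1` as `x → +∞`, uniformly over `|h| ≤ C / f''(x)`. -/
theorem stmt_2 (g f : ℝ → ℝ) (ν : ℝ)
    (hgpos : ∀ x, 0 < g x)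
    (hgmono : ∃ A : ℝ, MonotoneOn g (Set.Ici A) ∨ AntitoneOn g (Set.Ici A))
    (hgrv : ∀ l : ℝ, 0 < l →
      Tendsto (fun x => g (l * x) / g x) atTop (nhds (l ^ ν)))
    (hf2pos : ∀ᶠ x in atTop, 0 < deriv (deriv f) x)
    (hxf : Tendsto (fun x => x * deriv (deriv f) x) atTop atTop)
    (C : ℝ) (hC : 0 < C) :
    ∀ ε > 0, ∀ᶠ x in atTop, ∀ h : ℝ,
      |h| ≤ C / deriv (deriv f) x → |g (x + h) / g x - 1| < ε := by
  obtain ⟨A, hA⟩ := hgmono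
  intro ε hε
  -- continuity of l ↦ l ^ ν at 1
  have hcont : ContinuousAt (fun l : ℝ => l ^ ν) 1 :=
    Real.continuousAt_rpow_const 1 ν (Or.inl one_ne_zero)
  have hcont' := Metric.continuousAt_iff.mp hcont (ε / 2) (by linarith)
  obtain ⟨δ, hδ0, hδ⟩ := hcont'
  set d : ℝ := min (δ / 2) (1 / 2) with hd_def
  have hd0 : 0 < d := lt_min (by linarith) (by norm_num)
  have hd_half : d ≤ 1 / 2 := min_le_right _ _
  have hdδ : d < δ := lt_of_le_of_lt (min_le_left _ _) (by linarith)
  have h1d0 : 0 < 1 - d := by linarith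
  have h1d0' : (0:ℝ) < 1 + d := by linarith
  have hlo : |(1 - d) ^ ν - 1| < ε / 2 := by
    have := hδ (x := 1 - d) (by rw [Real.dist_eq]; simp [abs_of_nonpos]; rw [abs_of_nonneg hd0.le]; exact hdδ)
    rw [Real.dist_eq, Real.one_rpow] at this
    exact this
  have hhi : |(1 + d) ^ ν - 1| < ε / 2 := by
    have := hδ (x := 1 + d) (by rw [Real.dist_eq]; simp; rw [abs_of_nonneg hd0.le]; exact hdδ)
    rw [Real.dist_eq, Real.one_rpow] at this
    exact this
  have E1 := Metric.tendsto_nhds.mp (hgrv (1 - d) h1d0) (ε / 2) (by linarith)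
  have E2 := Metric.tendsto_nhds.mp (hgrv (1 + d) h1d0') (ε / 2) (by linarith)
  have E4 := hxf.eventually_ge_atTop (C / d)
  have E5 : ∀ᶠ x : ℝ in atTop, max (2 * A) 0 ≤ x := eventually_ge_atTop _
  filter_upwards [E1, E2, hf2pos, E4, E5] with x h1 h2 h3 h4 h5 h hh
  have hx0 : 0 ≤ x := le_trans (le_max_right _ _) h5
  have hxA : 2 * A ≤ x := le_trans (le_max_left _ _) h5
  -- C / f''(x) ≤ d * x
  have hbd : C / deriv (deriv f) x ≤ d * x := by
    rw [div_le_iff₀ h3]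
    have : C ≤ d * (x * deriv (deriv f) x) := by
      rw [← div_le_iff₀' hd0] ; exact h4
    nlinarith
  have hh' : |h| ≤ d * x := le_trans hh hbd
  rw [abs_le] at hh'
  have hxh_lo : (1 - d) * x ≤ x + h := by nlinarith
  have hxh_hi : x + h ≤ (1 + d) * x := by nlinarith
  -- membership in Ici A
  have hmemA : A ≤ (1 - d) * x := by nlinarith
  have hm1 : (1 - d) * x ∈ Set.Ici A := hmemA
  have hm2 : x + h ∈ Set.Ici A := le_trans hmemA hxh_lo
  have hm3 : (1 + d) * x ∈ Set.Ici A := le_trans hmemA (le_trans hxh_lo hxh_hi)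
  have hgx : 0 < g x := hgpos x
  rw [Real.dist_eq] at h1 h2
  rw [abs_lt] at h1 h2 hlo hhi ⊢
  rcases hA with hmono | hanti
  · have lb : g ((1 - d) * x) ≤ g (x + h) := hmono hm1 hm2 hxh_lo
    have ub : g (x + h) ≤ g ((1 + d) * x) := hmono hm2 hm3 hxh_hi
    have lb' : g ((1 - d) * x) / g x ≤ g (x + h) / g x :=
      div_le_div_of_nonneg_right lb hgx.le
    have ub' : g (x + h) / g x ≤ g ((1 + d) * x) / g x :=
      div_le_div_of_nonneg_right ub hgx.le
    constructor <;> linarith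
  · have ub : g (x + h) ≤ g ((1 - d) * x) := hanti hm1 hm2 hxh_lo
    have lb : g ((1 + d) * x) ≤ g (x + h) := hanti hm2 hm3 hxh_hi
    have lb' : g ((1 + d) * x) / g x ≤ g (x + h) / g x :=
      div_le_div_of_nonneg_right lb hgx.le
    have ub' : g (x + h) / g x ≤ g ((1 - d) * x) / g x :=
      div_le_div_of_nonneg_right ub hgx.le
    constructor <;> linarith
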